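/- The polynomial f(u,v) = u⁴ − u²v³ (holomorphic, hence a mixed polynomial) is Newton non-degenerate but not inner non-degenerate. -/
import Mathlib


open Complex

noncomputable section

/-- The index of a mixed monomial: `((ν₁,ν₂),(μ₁,μ₂))`. -/
abbrev MixedIdx : Type := (ℕ × ℕ) × (ℕ × ℕ)

/-- The coefficients `c_{ν,μ}` of a mixed polynomial `f(z,z̄) = Σ c_{ν,μ} z^ν z̄^μ`. -/
abbrev MixedCoeff : Type := MixedIdx → ℂ

/-- The exponent `ν + μ` of a mixed monomial index. -/
def expo (p : MixedIdx) : ℕ × ℕ := (p.1.1 + p.2.1, p.1.2 + p.2.2)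

/-- The linear form `ℓ_P` associated to a weight vector `P`; `ℓ_P ∘ expo` is the
radial degree `rdeg_P`. -/
def ellP (P : ℕ × ℕ) (w : ℕ × ℕ) : ℕ := P.1 * w.1 + P.2 * w.2

/-- The mixed monomial `u^ν₁ v^ν₂ ū^μ₁ v̄^μ₂`. -/
def mono (p : MixedIdx) (u v : ℂ) : ℂ :=
  u ^ p.1.1 * v ^ p.1.2 * (starRingEnd ℂ u) ^ p.2.1 * (starRingEnd ℂ v) ^ p.2.2

/-- Evaluation of the mixed polynomial with coefficients `c` at `(u,v) ∈ ℂ²`. -/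
def eval (c : MixedCoeff) (u v : ℂ) : ℂ := ∑ᶠ p, c p * mono p u v

/-- `c` has finitely many nonzero coefficients (so it really is a polynomial). -/
def FiniteSupp (c : MixedCoeff) : Prop := (Function.support c).Finite

/-- Wirtinger derivative `∂/∂u` at the level of coefficients. -/
def Du (c : MixedCoeff) : MixedCoeff := fun p => (p.1.1 + 1 : ℂ) * c ((p.1.1 + 1, p.1.2), p.2)

/-- Wirtinger derivative `∂/∂ū` at the level of coefficients. -/
def Dub (c : MixedCoeff) : MixedCoeff := fun p => (p.2.1 + 1 : ℂ) * c (p.1, (p.2.1 + 1, p.2.2))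

/-- Wirtinger derivative `∂/∂v` at the level of coefficients. -/
def Dv (c : MixedCoeff) : MixedCoeff := fun p => (p.1.2 + 1 : ℂ) * c ((p.1.1, p.1.2 + 1), p.2)

/-- Wirtinger derivative `∂/∂v̄` at the level of coefficients. -/
def Dvb (c : MixedCoeff) : MixedCoeff := fun p => (p.2.2 + 1 : ℂ) * c (p.1, (p.2.1, p.2.2 + 1))

/-- `(u,v)` is a critical point of the mixed polynomial `c` (the real Jacobian of the
associated map `ℝ⁴ → ℝ²` has rank `≤ 1`), expressed through Oka's equations
`s₁ = s₂ = s₃ = 0`. -/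
def Crit (c : MixedCoeff) (u v : ℂ) : Prop :=
  eval (Du c) u v * starRingEnd ℂ (eval (Dvb c) u v)
      - starRingEnd ℂ (eval (Dub c) u v) * eval (Dv c) u v = 0 ∧
  ‖eval (Du c) u v‖ = ‖eval (Dub c) u v‖ ∧
  ‖eval (Dv c) u v‖ = ‖eval (Dvb c) u v‖

/-- `d(P; c)`: the minimal radial degree of a monomial of `c` w.r.t. the weight `P`. -/
def dmin (P : ℕ × ℕ) (c : MixedCoeff) : ℕ :=
  sInf {n : ℕ | ∃ p, c p ≠ 0 ∧ ellP P (expo p) = n}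

/-- The `P`-relative face function: the monomials of minimal radial degree. -/
def face (P : ℕ × ℕ) (c : MixedCoeff) : MixedCoeff :=
  fun p => if ellP P (expo p) = dmin P c then c p else 0

/-- The face function of the vertex `w`: all monomials with exponent `w`. -/
def vertexFace (w : ℕ × ℕ) (c : MixedCoeff) : MixedCoeff :=
  fun p => if expo p = w then c p else 0

/-- `P` is the (primitive, positive) weight vector of a compact 1-face of the Newton
boundary of `c`: at least two distinct exponents realize the minimal radial degree. -/
def IsFaceWeight (c : MixedCoeff) (P : ℕ × ℕ) : Prop :=
  0 < P.1 ∧ 0 < P.2 ∧ Nat.gcd P.1 P.2 = 1 ∧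
  ∃ p q, c p ≠ 0 ∧ c q ≠ 0 ∧ expo p ≠ expo q ∧
    ellP P (expo p) = dmin P c ∧ ellP P (expo q) = dmin P c

/-- `P` is the weight vector of the steepest compact 1-face (the face `Δ(P₁)`). -/
def IsSteepest (c : MixedCoeff) (P : ℕ × ℕ) : Prop :=
  IsFaceWeight c P ∧ ∀ Q, IsFaceWeight c Q → Q.1 * P.2 ≤ P.1 * Q.2

/-- `P` is the weight vector of the least steep compact 1-face (the face `Δ(P_N)`). -/
def IsLeastSteep (c : MixedCoeff) (P : ℕ × ℕ) : Prop :=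
  IsFaceWeight c P ∧ ∀ Q, IsFaceWeight c Q → P.1 * Q.2 ≤ Q.1 * P.2

/-- `w` is a non-extreme vertex of the Newton boundary: a vertex (an exponent of `c`
lying on the boundary) bounding two different compact 1-faces. -/
def NonExtremeVertex (c : MixedCoeff) (w : ℕ × ℕ) : Prop :=
  (∃ p, c p ≠ 0 ∧ expo p = w) ∧
  ∃ P Q, IsFaceWeight c P ∧ IsFaceWeight c Q ∧ P.1 * Q.2 ≠ Q.1 * P.2 ∧
    ellP P w = dmin P c ∧ ellP Q w = dmin Q c

/-- `c` has an inner Newton non-degenerate boundary. -/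
def InnerNonDeg (c : MixedCoeff) : Prop :=
  (∀ P, IsSteepest c P → ∀ u v : ℂ, v ≠ 0 →
      eval (face P c) u v = 0 → ¬ Crit (face P c) u v) ∧
  (∀ P, IsLeastSteep c P → ∀ u v : ℂ, u ≠ 0 →
      eval (face P c) u v = 0 → ¬ Crit (face P c) u v) ∧
  (∀ P, IsFaceWeight c P → ∀ u v : ℂ, u ≠ 0 → v ≠ 0 →
      eval (face P c) u v = 0 → ¬ Crit (face P c) u v) ∧
  (∀ w, NonExtremeVertex c w → ∀ u v : ℂ, u ≠ 0 → v ≠ 0 →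
      eval (vertexFace w c) u v = 0 → ¬ Crit (vertexFace w c) u v)

/-- `c` has a strongly inner Newton non-degenerate boundary. -/
def StronglyInnerNonDeg (c : MixedCoeff) : Prop :=
  (∀ P, IsSteepest c P → ∀ u v : ℂ, v ≠ 0 → ¬ Crit (face P c) u v) ∧
  (∀ P, IsLeastSteep c P → ∀ u v : ℂ, u ≠ 0 → ¬ Crit (face P c) u v) ∧
  (∀ P, IsFaceWeight c P → ∀ u v : ℂ, u ≠ 0 → v ≠ 0 → ¬ Crit (face P c) u v) ∧
  (∀ w, NonExtremeVertex c w → ∀ u v : ℂ, u ≠ 0 → v ≠ 0 → ¬ Crit (vertexFace w c) u v)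

/-- Oka's Newton non-degeneracy: for every compact face (equivalently, for every
positive weight vector `Q`) the face function has no critical points on its zero set
in `(ℂ*)²`. -/
def NewtonNonDeg (c : MixedCoeff) : Prop :=
  ∀ Q : ℕ × ℕ, 0 < Q.1 → 0 < Q.2 → ∀ u v : ℂ, u ≠ 0 → v ≠ 0 →
    eval (face Q c) u v = 0 → ¬ Crit (face Q c) u v

/-- Oka's strong Newton non-degeneracy: every face function has no critical points
in `(ℂ*)²`. -/
def StronglyNewtonNonDeg (c : MixedCoeff) : Prop :=
  ∀ Q : ℕ × ℕ, 0 < Q.1 → 0 < Q.2 → ∀ u v : ℂ, u ≠ 0 → v ≠ 0 →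
    ¬ Crit (face Q c) u v

/-- The Newton boundary meets the horizontal axis. -/
def UConvenient (c : MixedCoeff) : Prop := ∃ p, c p ≠ 0 ∧ (expo p).2 = 0

/-- The Newton boundary meets the vertical axis. -/
def VConvenient (c : MixedCoeff) : Prop := ∃ p, c p ≠ 0 ∧ (expo p).1 = 0

/-- The monomial index `p` lies on the Newton boundary of `c`. -/
def OnBoundary (c : MixedCoeff) (p : MixedIdx) : Prop :=
  ∃ Q : ℕ × ℕ, 0 < Q.1 ∧ 0 < Q.2 ∧ ellP Q (expo p) = dmin Q c

/-- The coefficients of `f(u,v) = u⁴ − u²v³`. -/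
def c8 : MixedCoeff := fun p =>
  if p = ((4, 0), (0, 0)) then 1 else if p = ((2, 3), (0, 0)) then -1 else 0

/-- `f(u,v) = u⁴ − u²v³` is Newton non-degenerate but not inner
non-degenerate. -/
lemma c8_supp {p : MixedIdx} (h : c8 p ≠ 0) :
    p = ((4, 0), (0, 0)) ∨ p = ((2, 3), (0, 0)) := by
  unfold c8 at h
  split_ifs at h with h1 h2
  · exact Or.inl h1
  · exact Or.inr h2
  · exact absurd rfl h

lemma c8_p1 : c8 ((4, 0), (0, 0)) = 1 := by simp [c8]

lemma c8_p2 : c8 ((2, 3), (0, 0)) = -1 := by simp [c8]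

lemma eval_eq_zero {c : MixedCoeff} (h : ∀ p, c p = 0) (u v : ℂ) :
    eval c u v = 0 := by
  unfold eval
  have : ∀ p : MixedIdx, c p * mono p u v = 0 := fun p => by rw [h p, zero_mul]
  simp [this]

lemma eval_single {c : MixedCoeff} (a : MixedIdx) (h : ∀ p, p ≠ a → c p = 0)
    (u v : ℂ) : eval c u v = c a * mono a u v :=
  finsum_eq_single _ a fun p hp => by rw [h p hp, zero_mul]

lemma eval_pair {c : MixedCoeff} (a b : MixedIdx) (hab : a ≠ b)
    (h : ∀ p, c p ≠ 0 → p = a ∨ p = b) (u v : ℂ) :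
    eval c u v = c a * mono a u v + c b * mono b u v := by
  unfold eval
  rw [finsum_eq_sum_of_support_subset _ (s := {a, b}) ?_, Finset.sum_pair hab]
  intro p hp
  have hc : c p ≠ 0 := by
    intro h0
    simp [Function.mem_support, h0] at hp
  rcases h p hc with rfl | rfl <;> simp

lemma face_supp {Q : ℕ × ℕ} {p : MixedIdx} (h : face Q c8 p ≠ 0) : c8 p ≠ 0 := by
  unfold face at h
  split_ifs at h
  · exact h
  · exact absurd rfl h

lemma face_val {Q : ℕ × ℕ} (p : MixedIdx) :
    face Q c8 p = if ellP Q (expo p) = dmin Q c8 then c8 p else 0 := rfl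

/-- `∂/∂ū` of any face of `c8` vanishes identically. -/
lemma Dub_face_zero (Q : ℕ × ℕ) (p : MixedIdx) : Dub (face Q c8) p = 0 := by
  unfold Dub
  rcases eq_or_ne (face Q c8 (p.1, (p.2.1 + 1, p.2.2))) 0 with h0 | h0
  · rw [h0, mul_zero]
  · rcases c8_supp (face_supp h0) with h | h <;>
      · exfalso
        have := congrArg (fun q : MixedIdx => q.2.1) h
        simp at this

/-- `∂/∂v̄` of any face of `c8` vanishes identically. -/
lemma Dvb_face_zero (Q : ℕ × ℕ) (p : MixedIdx) : Dvb (face Q c8) p = 0 := by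
  unfold Dvb
  rcases eq_or_ne (face Q c8 (p.1, (p.2.1, p.2.2 + 1))) 0 with h0 | h0
  · rw [h0, mul_zero]
  · rcases c8_supp (face_supp h0) with h | h <;>
      · exfalso
        have := congrArg (fun q : MixedIdx => q.2.2) h
        simp at this

/-- `f(u,v) = u⁴ − u²v³` is Newton non-degenerate but not inner
non-degenerate. -/
theorem c8_newton_nondeg_not_inner :
    NewtonNonDeg c8 ∧ ¬ InnerNonDeg c8 := by
  constructor
  · -- Newton non-degenerate
    intro Q hQ1 hQ2 u v hu hv _ hC
    set F := face Q c8 with hF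
    -- at least one of the two monomials is on the face
    have hS : {n : ℕ | ∃ p, c8 p ≠ 0 ∧ ellP Q (expo p) = n}.Nonempty :=
      ⟨ellP Q (expo ((4, 0), (0, 0))), ((4, 0), (0, 0)), by rw [c8_p1]; exact one_ne_zero, rfl⟩
    have hmem := Nat.sInf_mem hS
    obtain ⟨p0, hp0, he0⟩ := hmem
    have hAB : ellP Q (expo (((4, 0), (0, 0)) : MixedIdx)) = dmin Q c8 ∨
        ellP Q (expo (((2, 3), (0, 0)) : MixedIdx)) = dmin Q c8 := by
      rcases c8_supp hp0 with rfl | rfl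
      · exact Or.inl he0
      · exact Or.inr he0
    by_cases hB : ellP Q (expo (((2, 3), (0, 0)) : MixedIdx)) = dmin Q c8
    · -- the monomial u²v³ is on the face; use ∂/∂v
      have hDv : ∀ p : MixedIdx, p ≠ ((2, 2), (0, 0)) → Dv F p = 0 := by
        intro p hp
        unfold Dv
        rcases eq_or_ne (F ((p.1.1, p.1.2 + 1), p.2)) 0 with h0 | h0
        · rw [h0, mul_zero]
        · exfalso
          rcases c8_supp (face_supp h0) with h | h
          · have := congrArg (fun q : MixedIdx => q.1.2) h
            simp at this
          · apply hp
            obtain ⟨⟨a, b⟩, m, n⟩ := p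
            simp [Prod.ext_iff] at h ⊢
            omega
      have hDvq : Dv F ((2, 2), (0, 0)) = -3 := by
        show ((2 : ℕ) + 1 : ℂ) * F ((2, 2 + 1), (0, 0)) = -3
        have : F ((2, 2 + 1), (0, 0)) = -1 := by
          show F ((2, 3), (0, 0)) = -1
          rw [hF, face_val, if_pos hB, c8_p2]
        rw [this]; norm_num
      have h1 : eval (Dv F) u v = -3 * (u ^ 2 * v ^ 2) := by
        rw [eval_single ((2, 2), (0, 0)) hDv, hDvq]
        simp [mono]
      have h2 : eval (Dvb F) u v = 0 := eval_eq_zero (Dvb_face_zero Q) u v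
      have := hC.2.2
      rw [h1, h2, norm_zero, norm_eq_zero] at this
      simp [hu, hv] at this
    · -- only u⁴ is on the face; use ∂/∂u
      have hA : ellP Q (expo (((4, 0), (0, 0)) : MixedIdx)) = dmin Q c8 :=
        hAB.resolve_right hB
      have hDu : ∀ p : MixedIdx, p ≠ ((3, 0), (0, 0)) → Du F p = 0 := by
        intro p hp
        unfold Du
        rcases eq_or_ne (F ((p.1.1 + 1, p.1.2), p.2)) 0 with h0 | h0
        · rw [h0, mul_zero]
        · exfalso
          rcases c8_supp (face_supp h0) with h | h
          · apply hp
            obtain ⟨⟨a, b⟩, m, n⟩ := p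
            simp [Prod.ext_iff] at h ⊢
            omega
          · apply h0
            rw [h, hF, face_val, if_neg hB]
      have hDuq : Du F ((3, 0), (0, 0)) = 4 := by
        show ((3 : ℕ) + 1 : ℂ) * F ((3 + 1, 0), (0, 0)) = 4
        have : F ((3 + 1, 0), (0, 0)) = 1 := by
          show F ((4, 0), (0, 0)) = 1
          rw [hF, face_val, if_pos hA, c8_p1]
        rw [this]; norm_num
      have h1 : eval (Du F) u v = 4 * u ^ 3 := by
        rw [eval_single ((3, 0), (0, 0)) hDu, hDuq]
        simp [mono]
      have h2 : eval (Dub F) u v = 0 := eval_eq_zero (Dub_face_zero Q) u v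
      have := hC.2.1
      rw [h1, h2, norm_zero, norm_eq_zero] at this
      simp [hu] at this
  · -- not inner non-degenerate
    intro hInner
    -- the steepest (indeed, unique) face weight is (3,2)
    have hd : dmin (3, 2) c8 = 12 := by
      have hSet : {n : ℕ | ∃ p, c8 p ≠ 0 ∧ ellP (3, 2) (expo p) = n} = {12} := by
        ext n
        constructor
        · rintro ⟨p, hp, he⟩
          rcases c8_supp hp with rfl | rfl
          · simpa [ellP, expo] using he.symm
          · simpa [ellP, expo] using he.symm
        · rintro rfl
          exact ⟨((4, 0), (0, 0)), by rw [c8_p1]; exact one_ne_zero, by simp [ellP, expo]⟩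
      show sInf {n : ℕ | ∃ p, c8 p ≠ 0 ∧ ellP (3, 2) (expo p) = n} = 12
      rw [hSet]
      exact csInf_singleton 12
    have hface : face (3, 2) c8 = c8 := by
      funext p
      rw [face_val]
      split_ifs with h
      · rfl
      · rcases eq_or_ne (c8 p) 0 with h0 | h0
        · exact h0.symm
        · exfalso
          apply h
          rw [hd]
          rcases c8_supp h0 with rfl | rfl <;> simp [ellP, expo]
    have hFW : IsFaceWeight c8 (3, 2) := by
      refine ⟨by norm_num, by norm_num, by norm_num,
        ((4, 0), (0, 0)), ((2, 3), (0, 0)),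
        by rw [c8_p1]; exact one_ne_zero,
        by rw [c8_p2]; exact neg_ne_zero.mpr one_ne_zero,
        by simp [expo], ?_, ?_⟩ <;> rw [hd] <;> simp [ellP, expo]
    have hSteep : IsSteepest c8 (3, 2) := by
      refine ⟨hFW, ?_⟩
      rintro Q ⟨_, _, _, p, q, hp, hq, hne, hep, heq⟩
      have key : ellP Q (4, 0) = ellP Q (2, 3) := by
        rcases c8_supp hp with rfl | rfl <;> rcases c8_supp hq with rfl | rfl
        · exact absurd rfl hne
        · rw [show ((4, 0) : ℕ × ℕ) = expo (((4, 0), (0, 0)) : MixedIdx) from rfl,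
            show ((2, 3) : ℕ × ℕ) = expo (((2, 3), (0, 0)) : MixedIdx) from rfl,
            hep, heq]
        · rw [show ((4, 0) : ℕ × ℕ) = expo (((4, 0), (0, 0)) : MixedIdx) from rfl,
            show ((2, 3) : ℕ × ℕ) = expo (((2, 3), (0, 0)) : MixedIdx) from rfl,
            heq, hep]
        · exact absurd rfl hne
      simp only [ellP] at key
      show Q.1 * 2 ≤ 3 * Q.2
      omega
    -- the whole face function f vanishes and is critical at (0,1), with v = 1 ≠ 0
    have hsupp2 : ∀ p : MixedIdx, c8 p ≠ 0 →
        p = ((4, 0), (0, 0)) ∨ p = ((2, 3), (0, 0)) := fun p hp => c8_supp hp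
    have hne12 : (((4, 0), (0, 0)) : MixedIdx) ≠ ((2, 3), (0, 0)) := by simp
    have heval : eval c8 0 1 = 0 := by
      rw [eval_pair _ _ hne12 hsupp2]
      simp [mono]
    have hDu0 : eval (Du c8) 0 1 = 0 := by
      have hsupp : ∀ p : MixedIdx, Du c8 p ≠ 0 →
          p = ((3, 0), (0, 0)) ∨ p = ((1, 3), (0, 0)) := by
        intro p hp
        unfold Du at hp
        rcases eq_or_ne (c8 ((p.1.1 + 1, p.1.2), p.2)) 0 with h0 | h0
        · rw [h0, mul_zero] at hp; exact absurd rfl hp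
        · rcases c8_supp h0 with h | h
          · left
            obtain ⟨⟨a, b⟩, m, n⟩ := p
            simp [Prod.ext_iff] at h ⊢
            omega
          · right
            obtain ⟨⟨a, b⟩, m, n⟩ := p
            simp [Prod.ext_iff] at h ⊢
            omega
      rw [eval_pair _ _ (by simp) hsupp]
      simp [mono]
    have hDv0 : eval (Dv c8) 0 1 = 0 := by
      have hsupp : ∀ p : MixedIdx, p ≠ ((2, 2), (0, 0)) → Dv c8 p = 0 := by
        intro p hp
        unfold Dv
        rcases eq_or_ne (c8 ((p.1.1, p.1.2 + 1), p.2)) 0 with h0 | h0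
        · rw [h0, mul_zero]
        · exfalso
          rcases c8_supp h0 with h | h
          · have := congrArg (fun q : MixedIdx => q.1.2) h
            simp at this
          · apply hp
            obtain ⟨⟨a, b⟩, m, n⟩ := p
            simp [Prod.ext_iff] at h ⊢
            omega
      rw [eval_single _ hsupp]
      simp [mono]
    have hDub0 : eval (Dub c8) 0 1 = 0 := by
      refine eval_eq_zero (fun p => ?_) 0 1
      unfold Dub
      rcases eq_or_ne (c8 (p.1, (p.2.1 + 1, p.2.2))) 0 with h0 | h0
      · rw [h0, mul_zero]
      · exfalso
        rcases c8_supp h0 with h | h <;>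
          · have := congrArg (fun q : MixedIdx => q.2.1) h
            simp at this
    have hDvb0 : eval (Dvb c8) 0 1 = 0 := by
      refine eval_eq_zero (fun p => ?_) 0 1
      unfold Dvb
      rcases eq_or_ne (c8 (p.1, (p.2.1, p.2.2 + 1))) 0 with h0 | h0
      · rw [h0, mul_zero]
      · exfalso
        rcases c8_supp h0 with h | h <;>
          · have := congrArg (fun q : MixedIdx => q.2.2) h
            simp at this
    have hCrit : Crit (face (3, 2) c8) 0 1 := by
      rw [hface]
      exact ⟨by rw [hDu0, hDv0, hDub0, hDvb0]; simp,
        by rw [hDu0, hDub0], by rw [hDv0, hDvb0]⟩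
    exact hInner.1 (3, 2) hSteep 0 1 one_ne_zero (by rw [hface]; exact heval) hCrit
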